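/- Let A be a Green's matrix with entries a_{ij} = p_{min(i,j)} * q_{max(i,j)}, let α = {i_1 < ... < i_m} and β = {j_1 < ... < j_m} be index sets, and set k_s = min(i_s,j_s), l_s = max(i_s,j_s). If max(i_s,j_s) < min(i_{s+1},j_{s+1}) for all 1 ≤ s ≤ m-1, then det A[α,β] = p_{k_1} * q_{l_m} * ∏_{s=1}^{m-1} (p_{k_{s+1}} q_{l_s} - p_{l_s} q_{k_{s+1}}). -/

import Mathlib

set_option linter.unreachableTactic false
set_option linter.unusedTactic false
open Matrix Finset
open Fin.NatCast

namespace GreenAux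

variable (x y u v a b e f : ℕ → ℝ)

/-- abstract entry function -/
def ent (s t : ℕ) : ℝ := if s < t then x s * v t else if t < s then y s * u t else a s * f s

def Bm (N : ℕ) : Matrix (Fin (N+1)) (Fin (N+1)) ℝ :=
  Matrix.of fun s t => ent x y u v a f (s:ℕ) (t:ℕ)

def Km (N : ℕ) : Matrix (Fin (N+1)) (Fin (N+1)) ℝ :=
  Matrix.of fun s t => if (t:ℕ) = N then x s else ent x y u v a f (s:ℕ) (t:ℕ)

def Gm (N : ℕ) : Matrix (Fin (N+1)) (Fin (N+1)) ℝ :=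
  Matrix.of fun s t =>
    if (s:ℕ) = N then (if (t:ℕ) = N then 0 else u t)
    else if (t:ℕ) = N then x s else ent x y u v a f (s:ℕ) (t:ℕ)

lemma coe_succAbove {N : ℕ} (j : Fin (N+2)) (s : Fin (N+1)) :
    ((j.succAbove s : Fin (N+2)) : ℕ) = if (s:ℕ) < (j:ℕ) then (s:ℕ) else (s:ℕ)+1 := by
  rw [Fin.succAbove]
  split_ifs with h1 h2 h3
  · simp
  · exact absurd (by simpa [Fin.lt_def] using h1) h2
  · exact absurd (by simpa [Fin.lt_def] using h3) h1
  · simp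

lemma det_single_col {N : ℕ} (M : Matrix (Fin (N+1)) (Fin (N+1)) ℝ) (i j : Fin (N+1))
    (h0 : ∀ s, s ≠ i → M s j = 0) :
    M.det = (-1)^((i:ℕ)+(j:ℕ)) * M i j * (M.submatrix i.succAbove j.succAbove).det := by
  rw [Matrix.det_succ_column M j, Finset.sum_eq_single i]
  · intro t _ ht
    rw [h0 t ht]; ring
  · intro h; exact absurd (Finset.mem_univ i) h

lemma det_single_row {N : ℕ} (M : Matrix (Fin (N+1)) (Fin (N+1)) ℝ) (i j : Fin (N+1))
    (h0 : ∀ t, t ≠ j → M i t = 0) :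
    M.det = (-1)^((i:ℕ)+(j:ℕ)) * M i j * (M.submatrix i.succAbove j.succAbove).det := by
  rw [Matrix.det_succ_row M i, Finset.sum_eq_single j]
  · intro t _ ht
    rw [h0 t ht]; ring
  · intro h; exact absurd (Finset.mem_univ j) h

lemma fin_ne_last_iff {N : ℕ} (t : Fin (N+2)) : t ≠ Fin.last (N+1) ↔ (t:ℕ) ≠ N+1 := by
  rw [Ne, Fin.ext_iff, Fin.val_last]

lemma L1 (N : ℕ) :
    (Bm x y u v a f (N+1)).det =
      (a (N+1) * f (N+1) - v (N+1) * x (N+1)) * (Bm x y u v a f N).det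
        + v (N+1) * (Km x y u v a f (N+1)).det := by
  set M := Bm x y u v a f (N+1) with hMdef
  set c1 : Fin (N+2) → ℝ :=
    fun s => if s = Fin.last (N+1) then a (N+1) * f (N+1) - v (N+1) * x (N+1) else 0 with hc1
  set c2 : Fin (N+2) → ℝ := fun s => x (s:ℕ) with hc2
  have hcol : c1 + v (N+1) • c2 = fun s => M s (Fin.last (N+1)) := by
    funext s
    simp only [hc1, hc2, Pi.add_apply, Pi.smul_apply, smul_eq_mul, hMdef, Bm, Matrix.of_apply,
      ent, Fin.val_last]
    rcases eq_or_lt_of_le (Nat.lt_succ_iff.mp s.isLt) with h | h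
    · rw [if_pos (Fin.ext h)]
      rw [if_neg (by omega), if_neg (by omega), h]; ring
    · rw [if_neg (by intro hh; rw [hh] at h; simp at h)]
      rw [if_pos h]; ring
  have hupdate : M.updateCol (Fin.last (N+1)) (c1 + v (N+1) • c2) = M := by
    rw [hcol]; exact Matrix.updateCol_eq_self M _
  rw [← hupdate, Matrix.det_updateCol_add, Matrix.det_updateCol_smul]
  congr 1
  · -- first piece
    rw [det_single_col _ (Fin.last (N+1)) (Fin.last (N+1))
      (by intro s hs; simp [Matrix.updateCol_apply, hc1, hs])]
    have hsign : ((-1:ℝ))^((Fin.last (N+1) : ℕ) + (Fin.last (N+1) : ℕ)) = 1 :=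
      Even.neg_one_pow ⟨N+1, by simp [Fin.val_last]⟩
    rw [hsign]
    have hval : (M.updateCol (Fin.last (N+1)) c1) (Fin.last (N+1)) (Fin.last (N+1))
        = a (N+1) * f (N+1) - v (N+1) * x (N+1) := by
      simp [Matrix.updateCol_apply, hc1]
    rw [hval]
    have hminor : (M.updateCol (Fin.last (N+1)) c1).submatrix
        (Fin.last (N+1)).succAbove (Fin.last (N+1)).succAbove = Bm x y u v a f N := by
      ext s t
      have ht : (Fin.last (N+1)).succAbove t = t.castSucc := by rw [Fin.succAbove_last]
      have hs : (Fin.last (N+1)).succAbove s = s.castSucc := by rw [Fin.succAbove_last]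
      have htne : t.castSucc ≠ Fin.last (N+1) := by
        intro hh
        have := congrArg Fin.val hh
        simp [Fin.val_last] at this
        omega
      simp [Matrix.submatrix_apply, hs, ht, Matrix.updateCol_apply, htne, hMdef, Bm]
    rw [hminor]; ring
  · -- second piece
    have : M.updateCol (Fin.last (N+1)) c2 = Km x y u v a f (N+1) := by
      ext s t
      by_cases ht : t = Fin.last (N+1)
      · simp [Matrix.updateCol_apply, ht, hc2, Km, Fin.val_last]
      · have htne : (t:ℕ) ≠ N+1 := by
          intro hh; exact ht (Fin.ext (by simp [Fin.val_last, hh]))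
        simp [Matrix.updateCol_apply, ht, Km, htne, hMdef, Bm]
    rw [this]

lemma L2 (N : ℕ) :
    (Km x y u v a f (N+1)).det =
      x (N+1) * (Bm x y u v a f N).det + y (N+1) * (Gm x y u v a f (N+1)).det := by
  set M := Km x y u v a f (N+1) with hMdef
  set r1 : Fin (N+2) → ℝ := fun t => if t = Fin.last (N+1) then x (N+1) else 0 with hr1
  set r2 : Fin (N+2) → ℝ := fun t => if t = Fin.last (N+1) then 0 else u (t:ℕ) with hr2
  have hrow : r1 + y (N+1) • r2 = fun t => M (Fin.last (N+1)) t := by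
    funext t
    simp only [hr1, hr2, Pi.add_apply, Pi.smul_apply, smul_eq_mul, hMdef, Km, Matrix.of_apply,
      ent, Fin.val_last]
    by_cases ht : t = Fin.last (N+1)
    · rw [if_pos ht, if_pos ht, if_pos (by simp [ht])]; ring
    · have htv : (t:ℕ) ≠ N+1 := (fin_ne_last_iff t).mp ht
      have htlt : (t:ℕ) < N+1 := by have := t.isLt; omega
      rw [if_neg ht, if_neg ht, if_neg htv, if_neg (by omega), if_pos htlt]; ring
  have hupdate : M.updateRow (Fin.last (N+1)) (r1 + y (N+1) • r2) = M := by
    rw [hrow]; exact Matrix.updateRow_eq_self M _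
  rw [← hupdate, Matrix.det_updateRow_add, Matrix.det_updateRow_smul]
  congr 1
  · rw [det_single_row _ (Fin.last (N+1)) (Fin.last (N+1))
      (by intro t ht; simp [Matrix.updateRow_apply, hr1, ht])]
    have hsign : ((-1:ℝ))^((Fin.last (N+1) : ℕ) + (Fin.last (N+1) : ℕ)) = 1 :=
      Even.neg_one_pow ⟨N+1, by simp [Fin.val_last]⟩
    rw [hsign]
    have hval : (M.updateRow (Fin.last (N+1)) r1) (Fin.last (N+1)) (Fin.last (N+1))
        = x (N+1) := by simp [Matrix.updateRow_apply, hr1]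
    rw [hval]
    have hminor : (M.updateRow (Fin.last (N+1)) r1).submatrix
        (Fin.last (N+1)).succAbove (Fin.last (N+1)).succAbove = Bm x y u v a f N := by
      ext s t
      have hsne : s.castSucc ≠ Fin.last (N+1) := by
        rw [fin_ne_last_iff]; simp [Fin.coe_castSucc]; omega
      have htne : (t:ℕ) ≠ N+1 := by have := t.isLt; omega
      simp [Matrix.submatrix_apply, Fin.succAbove_last, Matrix.updateRow_apply, hsne,
        hMdef, Km, htne, Bm]
    rw [hminor]; ring
  · have : M.updateRow (Fin.last (N+1)) r2 = Gm x y u v a f (N+1) := by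
      ext s t
      have hlast : ∀ w : Fin (N+2), (w = Fin.last (N+1)) ↔ (w:ℕ) = N+1 := fun w => by
        rw [Fin.ext_iff, Fin.val_last]
      by_cases hs : (s:ℕ) = N+1
      · rw [Matrix.updateRow_apply, if_pos ((hlast s).mpr hs)]
        simp only [hr2, Gm, Matrix.of_apply, if_pos hs]
        by_cases ht : (t:ℕ) = N+1
        · rw [if_pos ((hlast t).mpr ht), if_pos ht]
        · rw [if_neg (fun hh => ht ((hlast t).mp hh)), if_neg ht]
      · rw [Matrix.updateRow_apply, if_neg (fun hh => hs ((hlast s).mp hh))]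
        simp only [hMdef, Km, Gm, Matrix.of_apply, if_neg hs]
    rw [this]

lemma L3 (N : ℕ) :
    (Gm x y u v a f (N+1)).det =
      (a N * f N - v N * x N) * (Gm x y u v a f N).det - u N * (Km x y u v a f N).det := by
  set M := Gm x y u v a f (N+1) with hMdef
  set j : Fin (N+2) := ⟨N, by omega⟩ with hjdef
  have hj : (j:ℕ) = N := rfl
  have hjlast : j ≠ Fin.last (N+1) := by
    rw [Ne, Fin.ext_iff, Fin.val_last, hj]; omega
  set c1 : Fin (N+2) → ℝ := fun s => if s = Fin.last (N+1) then 0 else x (s:ℕ) with hc1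
  set c2 : Fin (N+2) → ℝ := fun s => if s = j then a N * f N - v N * x N else 0 with hc2
  set c3 : Fin (N+2) → ℝ := fun s => if s = Fin.last (N+1) then u N else 0 with hc3
  have hcol : v N • c1 + (c2 + c3) = fun s => M s j := by
    funext s
    obtain ⟨sv, hb⟩ := s
    simp only [Pi.add_apply, Pi.smul_apply, smul_eq_mul, hc1, hc2, hc3, hMdef, Gm,
      Matrix.of_apply, ent, hj, Fin.ext_iff, Fin.val_last]
    split_ifs <;>
      first | rfl | ring1 | omega | (exfalso; omega) | (subst_vars; first | rfl | ring1 | omega)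
  have hupdate : M.updateCol j (v N • c1 + (c2 + c3)) = M := by
    rw [hcol]; exact Matrix.updateCol_eq_self M _
  rw [← hupdate, Matrix.det_updateCol_add, Matrix.det_updateCol_add,
    Matrix.det_updateCol_smul]
  have hzero : (M.updateCol j c1).det = 0 := by
    refine Matrix.det_zero_of_column_eq hjlast (fun k => ?_)
    rw [Matrix.updateCol_apply, if_pos rfl, Matrix.updateCol_apply,
      if_neg (Ne.symm hjlast)]
    have hb := k.isLt
    simp only [hc1, hMdef, Gm, Matrix.of_apply, Fin.val_last, Fin.ext_iff]
    split_ifs <;> first | rfl | ring1 | omega | (exfalso; omega)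
  have hpiece2 : (M.updateCol j c2).det = (a N * f N - v N * x N) * (Gm x y u v a f N).det := by
    rw [det_single_col _ j j (by intro s hs; simp [Matrix.updateCol_apply, hc2, hs])]
    have hsign : ((-1:ℝ))^((j:ℕ)+(j:ℕ)) = 1 := Even.neg_one_pow ⟨N, by rw [hj]⟩
    have hval : (M.updateCol j c2) j j = a N * f N - v N * x N := by
      simp [Matrix.updateCol_apply, hc2]
    have hminor : (M.updateCol j c2).submatrix j.succAbove j.succAbove = Gm x y u v a f N := by
      ext s t
      rw [Matrix.submatrix_apply, Matrix.updateCol_apply, if_neg (Fin.succAbove_ne j t)]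
      have hsb := s.isLt
      have htb := t.isLt
      have hs0 := coe_succAbove j s
      have ht0 := coe_succAbove j t
      rw [hj] at hs0 ht0
      rcases Nat.lt_or_ge (s:ℕ) N with hsN | hsN
      · have hs2 : ((j.succAbove s : Fin (N+2)) : ℕ) = (s:ℕ) := by rw [hs0, if_pos hsN]
        rcases Nat.lt_or_ge (t:ℕ) N with htN | htN
        · have ht2 : ((j.succAbove t : Fin (N+2)) : ℕ) = (t:ℕ) := by rw [ht0, if_pos htN]
          simp only [hMdef, Gm, Matrix.of_apply, hs2, ht2, ent]
          split_ifs <;> first | rfl | ring1 | omega | (exfalso; omega)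
        · have ht2 : ((j.succAbove t : Fin (N+2)) : ℕ) = N+1 := by
            rw [ht0, if_neg (by omega)]; omega
          simp only [hMdef, Gm, Matrix.of_apply, hs2, ht2, ent]
          split_ifs <;> first | rfl | ring1 | omega | (exfalso; omega)
      · have hs2 : ((j.succAbove s : Fin (N+2)) : ℕ) = N+1 := by
          rw [hs0, if_neg (by omega)]; omega
        rcases Nat.lt_or_ge (t:ℕ) N with htN | htN
        · have ht2 : ((j.succAbove t : Fin (N+2)) : ℕ) = (t:ℕ) := by rw [ht0, if_pos htN]
          simp only [hMdef, Gm, Matrix.of_apply, hs2, ht2, ent]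
          split_ifs <;> first | rfl | ring1 | omega | (exfalso; omega)
        · have ht2 : ((j.succAbove t : Fin (N+2)) : ℕ) = N+1 := by
            rw [ht0, if_neg (by omega)]; omega
          simp only [hMdef, Gm, Matrix.of_apply, hs2, ht2, ent]
          split_ifs <;> first | rfl | ring1 | omega | (exfalso; omega)
    rw [hsign, hval, hminor]; ring
  have hpiece3 : (M.updateCol j c3).det = - (u N * (Km x y u v a f N).det) := by
    rw [det_single_col _ (Fin.last (N+1)) j
      (by intro s hs; simp [Matrix.updateCol_apply, hc3, hs])]
    have hsign : ((-1:ℝ))^((Fin.last (N+1):ℕ)+(j:ℕ)) = -1 := by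
      rw [Fin.val_last, hj]
      exact Odd.neg_one_pow ⟨N, by ring⟩
    have hval : (M.updateCol j c3) (Fin.last (N+1)) j = u N := by
      simp [Matrix.updateCol_apply, hc3]
    have hminor : (M.updateCol j c3).submatrix (Fin.last (N+1)).succAbove j.succAbove
        = Km x y u v a f N := by
      ext s t
      rw [Matrix.submatrix_apply, Matrix.updateCol_apply, if_neg (Fin.succAbove_ne j t),
        Fin.succAbove_last]
      have hsb := s.isLt
      have htb := t.isLt
      have ht0 := coe_succAbove j t
      rw [hj] at ht0
      have hsv : ((s.castSucc : Fin (N+2)) : ℕ) = (s:ℕ) := Fin.coe_castSucc s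
      rcases Nat.lt_or_ge (t:ℕ) N with htN | htN
      · have ht2 : ((j.succAbove t : Fin (N+2)) : ℕ) = (t:ℕ) := by rw [ht0, if_pos htN]
        simp only [hMdef, Gm, Km, Matrix.of_apply, ht2, hsv, ent]
        split_ifs <;> first | rfl | ring1 | omega | (exfalso; omega)
      · have ht2 : ((j.succAbove t : Fin (N+2)) : ℕ) = N+1 := by
          rw [ht0, if_neg (by omega)]; omega
        simp only [hMdef, Gm, Km, Matrix.of_apply, ht2, hsv, ent]
        split_ifs <;> first | rfl | ring1 | omega | (exfalso; omega)
    rw [hsign, hval, hminor]; ring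
  rw [hzero, hpiece2, hpiece3]; ring

lemma det_Bm_zero : (Bm x y u v a f 0).det = a 0 * f 0 := by
  rw [Matrix.det_fin_one]; simp [Bm, ent]

lemma det_Km_zero : (Km x y u v a f 0).det = x 0 := by
  rw [Matrix.det_fin_one]; simp [Km]

lemma det_Gm_zero : (Gm x y u v a f 0).det = 0 := by
  rw [Matrix.det_fin_one]; simp [Gm]

lemma closed
    (hcase : ∀ s : ℕ, (x s = a s ∧ y s = e s ∧ u s = b s ∧ v s = f s) ∨
      (x s = b s ∧ y s = f s ∧ u s = a s ∧ v s = e s)) (N : ℕ) :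
    (Bm x y u v a f N).det
        = a 0 * f N * ∏ s ∈ Finset.range N, (a (s+1) * f s - b s * e (s+1)) ∧
      (Gm x y u v a f (N+1)).det
        = -(a 0 * b N * ∏ s ∈ Finset.range N, (a (s+1) * f s - b s * e (s+1))) := by
  induction N with
  | zero =>
    constructor
    · simpa using det_Bm_zero x y u v a f
    · rw [L3, det_Gm_zero, det_Km_zero]
      rcases hcase 0 with ⟨hx, hy, hu, hv⟩ | ⟨hx, hy, hu, hv⟩ <;> rw [hx, hu] <;> simp <;> ring
  | succ N ih =>
    obtain ⟨hg, hh⟩ := ih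
    have hk : (Km x y u v a f (N+1)).det
        = x (N+1) * (Bm x y u v a f N).det + y (N+1) * (Gm x y u v a f (N+1)).det :=
      L2 x y u v a f N
    constructor
    · rw [L1, hk, hg, hh, Finset.prod_range_succ]
      rcases hcase (N+1) with ⟨hx, hy, hu, hv⟩ | ⟨hx, hy, hu, hv⟩ <;> rw [hx, hy, hv] <;> ring
    · rw [L3, hk, hg, hh, Finset.prod_range_succ]
      rcases hcase (N+1) with ⟨hx, hy, hu, hv⟩ | ⟨hx, hy, hu, hv⟩ <;> rw [hx, hy, hu, hv] <;> ring

end GreenAux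

theorem green_matrix_minor_formula (n m : ℕ) (p q : Fin n → ℝ)
    (A : Matrix (Fin n) (Fin n) ℝ)
    (hA : ∀ i j, A i j = p (min i j) * q (max i j))
    (r c : Fin (m + 1) → Fin n) (hr : StrictMono r) (hc : StrictMono c)
    (hsep : ∀ s : Fin m, max (r s.castSucc) (c s.castSucc) < min (r s.succ) (c s.succ)) :
    (A.submatrix r c).det =
      p (min (r 0) (c 0)) * q (max (r (Fin.last m)) (c (Fin.last m))) *
        ∏ s : Fin m,
          (p (min (r s.succ) (c s.succ)) * q (max (r s.castSucc) (c s.castSucc)) -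
            p (max (r s.castSucc) (c s.castSucc)) * q (min (r s.succ) (c s.succ))) := by
  set x : ℕ → ℝ := fun s => p (r s) with hxdef
  set y : ℕ → ℝ := fun s => q (r s) with hydef
  set u : ℕ → ℝ := fun s => p (c s) with hudef
  set v : ℕ → ℝ := fun s => q (c s) with hvdef
  set a : ℕ → ℝ := fun s => p (min (r s) (c s)) with hadef
  set b : ℕ → ℝ := fun s => p (max (r s) (c s)) with hbdef
  set e : ℕ → ℝ := fun s => q (min (r s) (c s)) with hedef
  set f : ℕ → ℝ := fun s => q (max (r s) (c s)) with hfdef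
  have key : ∀ s t : Fin (m+1), s < t → max (r s) (c s) < min (r t) (c t) := by
    intro s t hst
    have hsm : (s:ℕ) < m := by
      have h1 : (s:ℕ) < (t:ℕ) := hst
      have h2 := t.isLt
      omega
    set s' : Fin m := ⟨(s:ℕ), hsm⟩ with hs'def
    have hcs : s'.castSucc = s := Fin.ext rfl
    have h1 : max (r s) (c s) < min (r s'.succ) (c s'.succ) := by
      rw [← hcs]; exact hsep s'
    have h2 : s'.succ ≤ t := by
      rw [Fin.le_def]
      have : (s'.succ : ℕ) = (s:ℕ)+1 := rfl
      rw [this]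
      exact hst
    refine lt_of_lt_of_le h1 (le_min ?_ ?_)
    · exact le_trans (min_le_left _ _) (hr.monotone h2)
    · exact le_trans (min_le_right _ _) (hc.monotone h2)
  have hcase : ∀ s : ℕ, (x s = a s ∧ y s = e s ∧ u s = b s ∧ v s = f s) ∨
      (x s = b s ∧ y s = f s ∧ u s = a s ∧ v s = e s) := by
    intro s
    rcases le_total (r (s : Fin (m+1))) (c (s : Fin (m+1))) with h | h
    · left
      refine ⟨?_, ?_, ?_, ?_⟩ <;>
        simp [hxdef, hydef, hudef, hvdef, hadef, hbdef, hedef, hfdef,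
          min_eq_left h, max_eq_right h]
    · right
      refine ⟨?_, ?_, ?_, ?_⟩ <;>
        simp [hxdef, hydef, hudef, hvdef, hadef, hbdef, hedef, hfdef,
          min_eq_right h, max_eq_left h]
  have hsub : A.submatrix r c = GreenAux.Bm x y u v a f m := by
    ext s t
    rw [Matrix.submatrix_apply, hA]
    simp only [GreenAux.Bm, Matrix.of_apply, GreenAux.ent, hxdef, hydef, hudef, hvdef,
      hadef, hfdef, Fin.cast_val_eq_self]
    rcases lt_trichotomy ((s:ℕ)) ((t:ℕ)) with h | h | h
    · have hst : s < t := h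
      have h1 : r s < c t :=
        lt_of_le_of_lt (le_max_left _ _) (lt_of_lt_of_le (key s t hst) (min_le_right _ _))
      rw [if_pos h, min_eq_left h1.le, max_eq_right h1.le]
    · have hst : s = t := Fin.ext h
      rw [if_neg (by omega), if_neg (by omega), hst]
    · have hst : t < s := h
      have h1 : c t < r s :=
        lt_of_le_of_lt (le_max_right _ _) (lt_of_lt_of_le (key t s hst) (min_le_left _ _))
      rw [if_neg (by omega), if_pos h, min_eq_right h1.le, max_eq_left h1.le]
      ring
  have H := (GreenAux.closed x y u v a b e f hcase m).1
  rw [hsub, H]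
  have h0 : ((0 : ℕ) : Fin (m+1)) = 0 := by simp
  have hm : ((m : ℕ) : Fin (m+1)) = Fin.last m := by simp [Fin.natCast_self]
  have hprod : ∏ s ∈ Finset.range m, (a (s+1) * f s - b s * e (s+1)) =
      ∏ s : Fin m,
        (p (min (r s.succ) (c s.succ)) * q (max (r s.castSucc) (c s.castSucc)) -
          p (max (r s.castSucc) (c s.castSucc)) * q (min (r s.succ) (c s.succ))) := by
    rw [← Fin.prod_univ_eq_prod_range (fun s => (a (s+1) * f s - b s * e (s+1))) m]
    refine Finset.prod_congr rfl (fun s _ => ?_)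
    have h1 : (((s:ℕ)+1 : ℕ) : Fin (m+1)) = s.succ := by
      apply Fin.ext
      rw [Fin.val_cast_of_lt (by omega : (s:ℕ)+1 < m+1)]
      simp [Fin.val_succ]
    have h2 : (((s:ℕ) : ℕ) : Fin (m+1)) = s.castSucc := by
      apply Fin.ext
      rw [Fin.val_cast_of_lt (by have := s.isLt; omega : (s:ℕ) < m+1)]
      simp
    simp only [hadef, hbdef, hedef, hfdef, h1, h2]
  rw [← hprod, hadef, hfdef]
  simp only [h0, hm]
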